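/- For integers 0 < ν ≤ n, let C = {v ∈ ℝ^n, v ≠ 0 : v_i ≥ 0 for all 1 ≤ i ≤ ν, and ∑_{i=1}^ν v_i² ≥ ∑_{j=ν+1}^n v_j²} be the future causal cone of ℝ^{n−ν,ν} and T(x) = ∑_{i=1}^ν x_i. If γ : [0,1] → ℝ^n is Lipschitz and for almost every s ∈ [0,1] the derivative γ'(s) exists and lies in C ∪ {0}, then T(γ(1)) − T(γ(0)) ≥ ½‖γ(1) − γ(0)‖, where ‖·‖ is the Euclidean norm; in particular T(γ(1)) > T(γ(0)) whenever γ(1) ≠ γ(0). -/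

import Mathlib

open Finset MeasureTheory Filter



/-- A real Lipschitz function with a.e. nonnegative derivative on `[0,1]`
is larger at `1` than at `0`. -/
lemma lipschitz_nonneg_deriv_mono (h : ℝ → ℝ) (L : NNReal) (hh : LipschitzWith L h)
    (H : ∀ᵐ s ∂(volume : Measure ℝ), s ∈ Set.Icc (0 : ℝ) 1 →
      ∃ d, HasDerivAt h d s ∧ 0 ≤ d) :
    0 ≤ h 1 - h 0 := by
  classical
  set μ := (volume : Measure ℝ).restrict (Set.Icc (0:ℝ) 1) with hμ
  set a : ℕ → ℝ := fun k => 1 / (k + 1 : ℝ) with ha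
  have ha_pos : ∀ k, 0 < a k := fun k => by positivity
  have ha_lim : Tendsto a atTop (nhds (0:ℝ)) := tendsto_one_div_add_atTop_nhds_zero_nat
  set F : ℕ → ℝ → ℝ := fun k s => (h (s + a k) - h s) / a k with hF
  -- a.e. properties under μ
  have Hμ : ∀ᵐ s ∂μ, ∃ d, HasDerivAt h d s ∧ 0 ≤ d := by
    filter_upwards [ae_restrict_of_ae H, ae_restrict_mem measurableSet_Icc] with s hs hmem
    exact hs hmem
  have hlim : ∀ᵐ s ∂μ, Tendsto (fun k => F k s) atTop (nhds (deriv h s)) ∧ 0 ≤ deriv h s := by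
    filter_upwards [Hμ] with s hs
    obtain ⟨d, hd, hd0⟩ := hs
    have hdd : deriv h s = d := hd.deriv
    rw [hdd]
    refine ⟨?_, hd0⟩
    have hslope := hasDerivAt_iff_tendsto_slope.1 hd
    have hseq : Tendsto (fun k => s + a k) atTop (nhdsWithin s {s}ᶜ) := by
      apply tendsto_nhdsWithin_of_tendsto_nhds_of_eventually_within
      · have := ha_lim.const_add s
        simpa [ha, one_div] using this
      · filter_upwards with k
        simp only [Set.mem_compl_iff, Set.mem_singleton_iff]
        have := ha_pos k; intro hc; nlinarith [congrArg (· - s) hc]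
    have := hslope.comp hseq
    convert this using 2 with k
    simp [hF, slope_def_field, ha]
  have hcont : Continuous h := hh.continuous
  have hFmeas : ∀ k, AEStronglyMeasurable (F k) μ :=
    fun k => (((hcont.comp (continuous_id.add continuous_const)).sub hcont).div_const _).aestronglyMeasurable
  have hbound : ∀ k, ∀ᵐ s ∂μ, ‖F k s‖ ≤ (L : ℝ) := by
    intro k
    filter_upwards with s
    have h1 : |h (s + a k) - h s| ≤ (L : ℝ) * |(s + a k) - s| := by
      have := hh.dist_le_mul (s + a k) s
      simpa [Real.dist_eq] using this
    have h2 : |(s + a k) - s| = a k := by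
      rw [abs_of_pos]; ring; simpa using ha_pos k
    rw [hF]
    simp only [Real.norm_eq_abs, abs_div]
    rw [h2] at h1
    rw [abs_of_pos (ha_pos k)]
    rw [div_le_iff₀ (ha_pos k)]
    linarith [h1]
  have hDCT := tendsto_integral_of_dominated_convergence (fun _ => (L : ℝ)) hFmeas
    (integrable_const _) hbound (hlim.mono fun s hs => hs.1)
  -- the integral of the a.e. limit is nonnegative
  have hint_nonneg : 0 ≤ ∫ s, deriv h s ∂μ :=
    integral_nonneg_of_ae (hlim.mono fun s hs => hs.2)
  -- compute the integrals of the difference quotients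
  set P : ℝ → ℝ := fun t => ∫ x in (0:ℝ)..t, h x with hP
  have hPd : ∀ t, HasDerivAt P (h t) t := fun t =>
    intervalIntegral.integral_hasDerivAt_right (hcont.intervalIntegrable _ _)
      (hcont.stronglyMeasurableAtFilter _ _) hcont.continuousAt
  have hIF : ∀ k, ∫ s, F k s ∂μ = (P (1 + a k) - P 1) / a k - (P (0 + a k) - P 0) / a k := by
    intro k
    have e1 : ∫ s, F k s ∂μ = ∫ s in (0:ℝ)..1, F k s := by
      rw [intervalIntegral.integral_of_le zero_le_one, hμ,
        integral_Icc_eq_integral_Ioc]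
    rw [e1, hF]
    have hFi : (∫ s in (0:ℝ)..1, (h (s + a k) - h s) / a k)
        = ((∫ s in (0:ℝ)..1, h (s + a k)) - ∫ s in (0:ℝ)..1, h s) / a k := by
      rw [intervalIntegral.integral_div, intervalIntegral.integral_sub]
      · exact (hcont.comp (continuous_id.add continuous_const)).intervalIntegrable _ _
      · exact hcont.intervalIntegrable _ _
    rw [hFi, intervalIntegral.integral_comp_add_right]
    have e2 : (∫ x in (0 + a k)..(1 + a k), h x)
        = P (1 + a k) - P (0 + a k) := by
      rw [hP]
      rw [← intervalIntegral.integral_interval_sub_left (hcont.intervalIntegrable _ _)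
        (hcont.intervalIntegrable _ _)]
    rw [e2]
    have : P 0 = 0 := by simp [hP]
    rw [this]
    ring
  -- limit of those integrals is `h 1 - h 0`
  have hslope1 : Tendsto (fun k => (P (1 + a k) - P 1) / a k) atTop (nhds (h 1)) := by
    have hs1 := hasDerivAt_iff_tendsto_slope.1 (hPd 1)
    have hseq : Tendsto (fun k => (1:ℝ) + a k) atTop (nhdsWithin 1 {(1:ℝ)}ᶜ) := by
      apply tendsto_nhdsWithin_of_tendsto_nhds_of_eventually_within
      · have := ha_lim.const_add (1:ℝ); simpa [ha, one_div] using this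
      · filter_upwards with k
        simp only [Set.mem_compl_iff, Set.mem_singleton_iff]
        have := ha_pos k; intro hc; nlinarith [congrArg (· - (1:ℝ)) hc]
    have := hs1.comp hseq
    convert this using 2 with k
    simp [slope_def_field]
  have hslope0 : Tendsto (fun k => (P (0 + a k) - P 0) / a k) atTop (nhds (h 0)) := by
    have hs0 := hasDerivAt_iff_tendsto_slope.1 (hPd 0)
    have hseq : Tendsto (fun k => (0:ℝ) + a k) atTop (nhdsWithin 0 {(0:ℝ)}ᶜ) := by
      apply tendsto_nhdsWithin_of_tendsto_nhds_of_eventually_within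
      · have := ha_lim.const_add (0:ℝ); simpa [ha, one_div] using this
      · filter_upwards with k
        simp only [Set.mem_compl_iff, Set.mem_singleton_iff]
        have := ha_pos k; intro hc; nlinarith [congrArg (· - (0:ℝ)) hc]
    have := hs0.comp hseq
    convert this using 2 with k
    simp [slope_def_field]
  have hIlim : Tendsto (fun k => ∫ s, F k s ∂μ) atTop (nhds (h 1 - h 0)) := by
    simp only [hIF]
    exact hslope1.sub hslope0
  have := tendsto_nhds_unique hDCT hIlim
  linarith [hint_nonneg, this]


/-- The future causal cone of `ℝ^{n−ν,ν}`. -/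
def flatFutureCone (n ν : ℕ) : Set (EuclideanSpace ℝ (Fin n)) :=
  {v | v ≠ 0 ∧ (∀ i : Fin n, (i : ℕ) < ν → 0 ≤ v i) ∧
    ∑ j ∈ Finset.univ.filter (fun j : Fin n => ¬ (j : ℕ) < ν), v j ^ 2 ≤
      ∑ i ∈ Finset.univ.filter (fun i : Fin n => (i : ℕ) < ν), v i ^ 2}

/-- The canonical time function `T(x) = ∑_{i<ν} xᵢ` of `ℝ^{n−ν,ν}`. -/
def flatTime (n ν : ℕ) (x : EuclideanSpace ℝ (Fin n)) : ℝ :=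
  ∑ i ∈ Finset.univ.filter (fun i : Fin n => (i : ℕ) < ν), x i

lemma flatTime_ge_half_norm {n ν : ℕ} {v : EuclideanSpace ℝ (Fin n)}
    (hv : v ∈ flatFutureCone n ν) : (1 / 2) * ‖v‖ ≤ flatTime n ν v := by
  obtain ⟨-, hpos, hineq⟩ := hv
  set A := ∑ i ∈ Finset.univ.filter (fun i : Fin n => (i : ℕ) < ν), v i ^ 2 with hA
  set B := ∑ j ∈ Finset.univ.filter (fun j : Fin n => ¬ (j : ℕ) < ν), v j ^ 2 with hB
  have hnorm : ‖v‖ ^ 2 = A + B := by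
    rw [EuclideanSpace.norm_eq, Real.sq_sqrt (by positivity)]
    simp only [Real.norm_eq_abs, sq_abs]
    rw [hA, hB, Finset.sum_filter_add_sum_filter_not]
  have hT0 : 0 ≤ flatTime n ν v :=
    Finset.sum_nonneg fun i hi => hpos i (Finset.mem_filter.1 hi).2
  have hTA : A ≤ (flatTime n ν v) ^ 2 := by
    rw [hA, flatTime]
    exact Finset.sum_sq_le_sq_sum_of_nonneg fun i hi => hpos i (Finset.mem_filter.1 hi).2
  have hB0 : 0 ≤ B := Finset.sum_nonneg fun j _ => sq_nonneg _
  have hn0 : 0 ≤ ‖v‖ := norm_nonneg _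
  nlinarith [sq_nonneg (flatTime n ν v - (1/2) * ‖v‖), sq_nonneg ‖v‖]

-- the indicator vector of the first ν coordinates
noncomputable def flatU (n ν : ℕ) : EuclideanSpace ℝ (Fin n) :=
  WithLp.toLp 2 (fun i => if (i : ℕ) < ν then 1 else 0)

lemma inner_flatU {n ν : ℕ} (x : EuclideanSpace ℝ (Fin n)) :
    inner ℝ (flatU n ν) x = flatTime n ν x := by
  rw [PiLp.inner_apply, flatTime, Finset.sum_filter]
  congr 1; ext i
  simp [flatU]


/-- Section 5.3: along any Lipschitz curve `γ : [0,1] → ℝ^{n−ν,ν}` whose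
a.e. derivative lies in `C ∪ {0}`, the canonical time function satisfies
`T(γ(1)) − T(γ(0)) ≥ ½‖γ(1) − γ(0)‖`; in particular `T(γ(1)) > T(γ(0))`
whenever `γ(1) ≠ γ(0)`. -/
theorem flatTime_along_causal_curves (n ν : ℕ) (hν : 0 < ν) (hn : ν ≤ n)
    (γ : ℝ → EuclideanSpace ℝ (Fin n)) (K : NNReal) (hγ : LipschitzWith K γ)
    (hderiv : ∀ᵐ s ∂(volume : Measure ℝ), s ∈ Set.Icc (0 : ℝ) 1 →
      ∃ v, HasDerivAt γ v s ∧ (v = 0 ∨ v ∈ flatFutureCone n ν)) :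
    (1 / 2) * ‖γ 1 - γ 0‖ ≤ flatTime n ν (γ 1) - flatTime n ν (γ 0) ∧
    (γ 1 ≠ γ 0 → flatTime n ν (γ 0) < flatTime n ν (γ 1)) := by

  set w : EuclideanSpace ℝ (Fin n) := γ 1 - γ 0 with hw
  set c : ℝ := (2 * ‖w‖)⁻¹ with hc
  have hc0 : 0 ≤ c := by positivity
  set z : EuclideanSpace ℝ (Fin n) := flatU n ν - c • w with hz
  set h : ℝ → ℝ := fun s => inner ℝ z (γ s) with hhdef
  have hlip : LipschitzWith (‖(innerSL ℝ z : EuclideanSpace ℝ (Fin n) →L[ℝ] ℝ)‖₊ * K) h :=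
    (innerSL ℝ z).lipschitz.comp hγ
  have key : ∀ v : EuclideanSpace ℝ (Fin n), v = 0 ∨ v ∈ flatFutureCone n ν →
      0 ≤ (inner ℝ z v : ℝ) := by
    rintro v (rfl | hv)
    · simp
    · have h1 : (inner ℝ z v : ℝ) = flatTime n ν v - c * inner ℝ w v := by
        rw [hz, inner_sub_left, inner_flatU, real_inner_smul_left]
      have h2 : (inner ℝ w v : ℝ) ≤ ‖w‖ * ‖v‖ := real_inner_le_norm w v
      have h3 : (1/2) * ‖v‖ ≤ flatTime n ν v := flatTime_ge_half_norm hv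
      have h4 : c * inner ℝ w v ≤ (1/2) * ‖v‖ := by
        rcases eq_or_ne (‖w‖) 0 with h5 | h5
        · have hw0 : w = 0 := by rwa [norm_eq_zero] at h5
          rw [hw0]
          simp
        · have h6 : 0 < ‖w‖ := lt_of_le_of_ne (norm_nonneg _) (Ne.symm h5)
          calc c * inner ℝ w v ≤ c * (‖w‖ * ‖v‖) := by
                apply mul_le_mul_of_nonneg_left h2 hc0
          _ = (1/2) * ‖v‖ := by rw [hc]; field_simp
      linarith
  have H : ∀ᵐ s ∂(volume : Measure ℝ), s ∈ Set.Icc (0 : ℝ) 1 →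
      ∃ d, HasDerivAt h d s ∧ 0 ≤ d := by
    filter_upwards [hderiv] with s hs hmem
    obtain ⟨v, hv, hvc⟩ := hs hmem
    exact ⟨inner ℝ z v, (innerSL ℝ z).hasFDerivAt.comp_hasDerivAt s hv, key v hvc⟩
  have hmain := lipschitz_nonneg_deriv_mono h _ hlip H
  have hdiff : h 1 - h 0 = flatTime n ν (γ 1) - flatTime n ν (γ 0) - c * ‖w‖ ^ 2 := by
    have : h 1 - h 0 = (inner ℝ z w : ℝ) := by
      rw [hhdef, hw]; simp [inner_sub_right]
    rw [this, hz, inner_sub_left, inner_flatU, real_inner_smul_left,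
      real_inner_self_eq_norm_sq]
    have : flatTime n ν w = flatTime n ν (γ 1) - flatTime n ν (γ 0) := by
      rw [hw, flatTime, flatTime, flatTime, ← Finset.sum_sub_distrib]
      rfl
    rw [this]
  have hcw : c * ‖w‖ ^ 2 = (1/2) * ‖w‖ := by
    rcases eq_or_ne (‖w‖) 0 with h5 | h5
    · simp [h5]
    · rw [hc]; field_simp
  have hfinal : (1 / 2) * ‖w‖ ≤ flatTime n ν (γ 1) - flatTime n ν (γ 0) := by
    rw [hdiff, hcw] at hmain; linarith
  refine ⟨hfinal, fun hne => ?_⟩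
  have : 0 < ‖w‖ := by
    rw [hw, norm_pos_iff]; exact sub_ne_zero.2 hne
  nlinarith
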